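/- arXiv:2404.18622 — 3 statements merged into one kernel-verified Lean document; each statement's English description precedes it below -/
import Mathlib

section
/- For every n ≥ 5, the elliptic Sombor characteristic polynomial of the path graph P_n satisfies φ_ESO(P_n,λ) = λ²·Λ_{n−2} − 90λ·Λ_{n−3} + 2025·Λ_{n−4}, where Λ_1 = λ, Λ_2 = λ² − 128, and Λ_k = λ·Λ_{k−1} − 128·Λ_{k−2} for k ≥ 3. -/
open Polynomial Real

open scoped Classical in
/-- The elliptic Sombor matrix of a simple graph. -/
noncomputable def esoMatrix {V : Type*} [Fintype V] (G : SimpleGraph V) : Matrix V V ℝ :=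
  Matrix.of fun i j =>
    if G.Adj i j then
      ((G.degree i : ℝ) + (G.degree j : ℝ)) *
        Real.sqrt ((G.degree i : ℝ) ^ 2 + (G.degree j : ℝ) ^ 2)
    else 0

theorem esoMatrix_isHermitian {V : Type*} [Fintype V] (G : SimpleGraph V) :
    (esoMatrix G).IsHermitian := by
  classical
  show (esoMatrix G).conjTranspose = esoMatrix G
  ext i j
  simp only [esoMatrix, Matrix.conjTranspose_apply, Matrix.of_apply, star_trivial]
  by_cases h : G.Adj i j
  · rw [if_pos h, if_pos (G.adj_symm h), add_comm ((G.degree j : ℝ)) ((G.degree i : ℝ)),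
      add_comm (((G.degree j : ℝ)) ^ 2) (((G.degree i : ℝ)) ^ 2)]
  · rw [if_neg h, if_neg (fun h' => h (G.adj_symm h'))]

/-- The elliptic Sombor characteristic polynomial. -/
noncomputable def esoCharpoly {V : Type*} [Fintype V] [DecidableEq V] (G : SimpleGraph V) :
    Polynomial ℝ := (esoMatrix G).charpoly

/-- The elliptic Sombor energy: sum of absolute values of eigenvalues of the
elliptic Sombor matrix. -/
noncomputable def esoEnergy {V : Type*} [Fintype V] [DecidableEq V] (G : SimpleGraph V) : ℝ :=
  ∑ i, |(esoMatrix_isHermitian G).eigenvalues i|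

/-- The auxiliary polynomial sequence: `Λ₁ = λ`, `Λ₂ = λ² - 128`, and
`Λ_k = λΛ_{k-1} - 128Λ_{k-2}` for `k ≥ 3`. -/
noncomputable def Lam : ℕ → Polynomial ℝ
  | 0 => 1
  | 1 => X
  | (k + 2) => X * Lam (k + 1) - C 128 * Lam k

noncomputable def T (b : ℕ → ℝ) (n : ℕ) : Matrix (Fin n) (Fin n) (Polynomial ℝ) :=
  Matrix.of fun i j =>
    if (i : ℕ) = j then X
    else if (i : ℕ) + 1 = j ∨ (j : ℕ) + 1 = i then -C (b (min (i : ℕ) (j : ℕ))) else 0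

lemma T_congr {b b' : ℕ → ℝ} {n : ℕ} (h : ∀ k, k + 2 ≤ n → b k = b' k) :
    T b n = T b' n := by
  ext i j
  have hi := i.isLt; have hj := j.isLt
  simp only [T, Matrix.of_apply]
  by_cases hd : (i : ℕ) = j
  · simp [hd]
  · rw [if_neg hd, if_neg hd]
    by_cases ha : (i : ℕ) + 1 = j ∨ (j : ℕ) + 1 = i
    · rw [if_pos ha, if_pos ha, h _ (by omega)]
    · rw [if_neg ha, if_neg ha]


lemma T_submatrix_rev (b : ℕ → ℝ) (n : ℕ) :
    (T b n).submatrix Fin.rev Fin.rev = T (fun k => b (n - 2 - k)) n := by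
  ext i j
  have hi := i.isLt; have hj := j.isLt
  simp only [Matrix.submatrix_apply, T, Matrix.of_apply, Fin.val_rev]
  by_cases hd : (i : ℕ) = j
  · simp [hd]
  · rw [if_neg (by omega), if_neg hd]
    by_cases ha : (i : ℕ) + 1 = j ∨ (j : ℕ) + 1 = i
    · rw [if_pos (by omega), if_pos ha]
      have h : min (n - ((i:ℕ) + 1)) (n - ((j:ℕ) + 1)) = n - 2 - min (i:ℕ) (j:ℕ) := by omega
      rw [h]
    · rw [if_neg (by omega), if_neg ha]

lemma T_sub_succ (b : ℕ → ℝ) (n : ℕ) :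
    (T b (n+1)).submatrix Fin.succ Fin.succ = T (fun k => b (k+1)) n := by
  ext i j
  simp only [Matrix.submatrix_apply, T, Matrix.of_apply, Fin.val_succ]
  by_cases hd : (i : ℕ) = j
  · simp [hd]
  · rw [if_neg (by omega), if_neg hd]
    by_cases ha : (i : ℕ) + 1 = j ∨ (j : ℕ) + 1 = i
    · rw [if_pos (by omega), if_pos ha]
      have h : min ((i:ℕ) + 1) ((j:ℕ) + 1) = min (i:ℕ) (j:ℕ) + 1 := by omega
      rw [h]
    · rw [if_neg (by omega), if_neg ha]

lemma det_T_rec (b : ℕ → ℝ) (n : ℕ) :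
    (T b (n+2)).det = X * (T (fun k => b (k+1)) (n+1)).det
      - C (b 0) ^ 2 * (T (fun k => b (k+2)) n).det := by
  rw [Matrix.det_succ_row_zero, Fin.sum_univ_succ, Fin.sum_univ_succ]
  have hz : ∀ i : Fin n, T b (n+2) 0 i.succ.succ = (0 : Polynomial ℝ) := by
    intro i
    simp [T]
  have h00 : T b (n+2) 0 0 = (X : Polynomial ℝ) := by
    simp [T]
  have h01 : T b (n+2) 0 (Fin.succ 0) = -C (b 0) := by
    simp [T]
  have hsub0 : (T b (n+2)).submatrix Fin.succ ((0 : Fin (n+2)).succAbove)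
      = T (fun k => b (k+1)) (n+1) := by
    rw [Fin.succAbove_zero, T_sub_succ]
  -- the N matrix
  set N := (T b (n+2)).submatrix Fin.succ ((Fin.succ (0 : Fin (n+1))).succAbove) with hN
  have hNdet : N.det = -C (b 0) * (T (fun k => b (k+2)) n).det := by
    rw [Matrix.det_succ_column_zero, Fin.sum_univ_succ]
    have hz2 : ∀ i : Fin n, N i.succ 0 = (0 : Polynomial ℝ) := by
      intro i
      rw [hN]
      simp [T]
    have hN00 : N 0 0 = -C (b 0) := by
      rw [hN]
      simp [T]
    have hNsub : N.submatrix ((0 : Fin (n+1)).succAbove) Fin.succ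
        = T (fun k => b (k+2)) n := by
      rw [Fin.succAbove_zero, hN, Matrix.submatrix_submatrix]
      have hc : (Fin.succ (0 : Fin (n+1))).succAbove ∘ Fin.succ
          = Fin.succ ∘ (Fin.succ : Fin n → Fin (n+1)) := by
        funext j
        simp [Function.comp, Fin.succ_succAbove_succ]
      rw [hc, ← Matrix.submatrix_submatrix, T_sub_succ, T_sub_succ]
    rw [hN00, hNsub]
    simp [hz2]
  rw [h00, h01, hsub0, hNdet]
  simp only [hz, mul_zero, zero_mul, add_zero, Finset.sum_const_zero,
    Fin.val_zero, Fin.val_succ, pow_zero, pow_one, pow_succ]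
  ring

lemma sq_sqrt8 : (C (4 * Real.sqrt 8) : Polynomial ℝ) ^ 2 = C 128 := by
  rw [← map_pow]
  congr 1
  rw [mul_pow, Real.sq_sqrt (by norm_num : (8:ℝ) ≥ 0)]
  norm_num

lemma sq_sqrt5 : (C (3 * Real.sqrt 5) : Polynomial ℝ) ^ 2 = C 45 := by
  rw [← map_pow]
  congr 1
  rw [mul_pow, Real.sq_sqrt (by norm_num : (5:ℝ) ≥ 0)]
  norm_num

lemma det_T_const : ∀ k, (T (fun _ => 4 * Real.sqrt 8) k).det = Lam k
  | 0 => by simp [Lam]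
  | 1 => by simp [T, Lam]
  | (k + 2) => by
    rw [det_T_rec]
    have h1 : (T (fun j => (fun _ => 4 * Real.sqrt 8) (j+1)) (k+1)).det = Lam (k+1) :=
      det_T_const (k+1)
    have h2 : (T (fun j => (fun _ => 4 * Real.sqrt 8) (j+2)) k).det = Lam k :=
      det_T_const k
    rw [h1, h2, sq_sqrt8, Lam]

noncomputable def bL : ℕ → ℝ := fun k => if k = 0 then 3 * Real.sqrt 5 else 4 * Real.sqrt 8

lemma det_T_bL (k : ℕ) : (T bL (k+2)).det = X * Lam (k+1) - C 45 * Lam k := by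
  rw [det_T_rec]
  have h1 : T (fun j => bL (j+1)) (k+1) = T (fun _ => 4 * Real.sqrt 8) (k+1) :=
    T_congr (fun j _ => by simp [bL])
  have h2 : T (fun j => bL (j+2)) k = T (fun _ => 4 * Real.sqrt 8) k :=
    T_congr (fun j _ => by simp [bL])
  have h0 : bL 0 = 3 * Real.sqrt 5 := by simp [bL]
  rw [h1, h2, det_T_const, det_T_const, h0, sq_sqrt5]

lemma det_T_rev (b : ℕ → ℝ) (n : ℕ) :
    (T (fun k => b (n - 2 - k)) n).det = (T b n).det := by
  rw [← T_submatrix_rev]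
  have h : (T b n).submatrix Fin.rev Fin.rev
      = (T b n).submatrix (Fin.revPerm : Fin n ≃ Fin n) (Fin.revPerm : Fin n ≃ Fin n) := rfl
  rw [h, Matrix.det_submatrix_equiv_self]

lemma pathGraph_degree {n : ℕ} (hn : 2 ≤ n) (i : Fin n)
    [Fintype ((SimpleGraph.pathGraph n).neighborSet i)] :
    (SimpleGraph.pathGraph n).degree i = if (i : ℕ) = 0 ∨ (i : ℕ) = n - 1 then 1 else 2 := by
  classical
  have hi := i.isLt
  rw [← SimpleGraph.card_neighborFinset_eq_degree]
  by_cases h0 : (i : ℕ) = 0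
  · have key : (SimpleGraph.pathGraph n).neighborFinset i = {(⟨1, by omega⟩ : Fin n)} := by
      ext a
      have ha := a.isLt
      simp only [SimpleGraph.mem_neighborFinset, SimpleGraph.pathGraph_adj,
        Finset.mem_singleton, Fin.ext_iff]
      omega
    rw [key, if_pos (Or.inl h0), Finset.card_singleton]
  · by_cases h1 : (i : ℕ) = n - 1
    · have key : (SimpleGraph.pathGraph n).neighborFinset i = {(⟨n - 2, by omega⟩ : Fin n)} := by
        ext a
        have ha := a.isLt
        simp only [SimpleGraph.mem_neighborFinset, SimpleGraph.pathGraph_adj,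
          Finset.mem_singleton, Fin.ext_iff]
        omega
      rw [key, if_pos (Or.inr h1), Finset.card_singleton]
    · have key : (SimpleGraph.pathGraph n).neighborFinset i
          = {(⟨(i : ℕ) - 1, by omega⟩ : Fin n), (⟨(i : ℕ) + 1, by omega⟩ : Fin n)} := by
        ext a
        have ha := a.isLt
        simp only [SimpleGraph.mem_neighborFinset, SimpleGraph.pathGraph_adj,
          Finset.mem_insert, Finset.mem_singleton, Fin.ext_iff]
        omega
      rw [key, if_neg (by tauto), Finset.card_pair (by simp only [ne_eq, Fin.mk.injEq]; omega)]

lemma charmatrix_path (m : ℕ) :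
    Matrix.charmatrix (esoMatrix (SimpleGraph.pathGraph (m+5))) =
      T (fun k => if k = 0 ∨ k = m + 3 then 3 * Real.sqrt 5 else 4 * Real.sqrt 8) (m+5) := by
  classical
  have hdeg : ∀ k : Fin (m+5), ((SimpleGraph.pathGraph (m+5)).degree k : ℝ)
      = if (k:ℕ) = 0 ∨ (k:ℕ) = m+4 then 1 else 2 := by
    intro k
    rw [pathGraph_degree (by omega) k]
    have e : m + 5 - 1 = m + 4 := rfl
    rw [e]
    split_ifs <;> norm_num
  refine Matrix.ext fun i j => ?_
  have hi := i.isLt; have hj := j.isLt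
  by_cases hd : i = j
  · subst hd
    rw [Matrix.charmatrix_apply_eq]
    have h0 : esoMatrix (SimpleGraph.pathGraph (m+5)) i i = 0 := by
      simp [esoMatrix]
    rw [h0, map_zero, sub_zero]
    simp [T]
  · rw [Matrix.charmatrix_apply_ne _ _ _ hd]
    have hdv : (i : ℕ) ≠ j := fun h => hd (Fin.ext h)
    by_cases ha : (SimpleGraph.pathGraph (m+5)).Adj i j
    · have hav := SimpleGraph.pathGraph_adj.mp ha
      have hT : T (fun k => if k = 0 ∨ k = m + 3 then 3 * Real.sqrt 5 else 4 * Real.sqrt 8)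
            (m+5) i j
          = -C (if min (i:ℕ) (j:ℕ) = 0 ∨ min (i:ℕ) (j:ℕ) = m+3 then 3 * Real.sqrt 5
              else 4 * Real.sqrt 8) := by
        simp only [T, Matrix.of_apply]
        rw [if_neg hdv, if_pos hav]
      rw [hT, neg_inj, C_inj]
      simp only [esoMatrix, Matrix.of_apply]
      rw [if_pos ha, hdeg i, hdeg j]
      split_ifs <;> first | (exfalso; omega) | norm_num
    · have hnav : ¬((i:ℕ) + 1 = j ∨ (j:ℕ) + 1 = i) :=
        fun h => ha (SimpleGraph.pathGraph_adj.mpr h)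
      have h0 : esoMatrix (SimpleGraph.pathGraph (m+5)) i j = 0 := by
        simp only [esoMatrix, Matrix.of_apply]
        rw [if_neg ha]
      rw [h0, map_zero, neg_zero]
      simp only [T, Matrix.of_apply]
      rw [if_neg hdv, if_neg hnav]

lemma C_90 : (C 90 : Polynomial ℝ) = C 45 + C 45 := by rw [← C_add]; norm_num
lemma C_2025 : (C 2025 : Polynomial ℝ) = C 45 * C 45 := by rw [← C_mul]; norm_num

lemma det_T_path (m : ℕ) :
    (T (fun k => if k = 0 ∨ k = m + 3 then 3 * Real.sqrt 5 else 4 * Real.sqrt 8) (m+5)).det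
      = X^2 * Lam (m+3) - C 90 * X * Lam (m+2) + C 2025 * Lam (m+1) := by
  set bP : ℕ → ℝ := fun k => if k = 0 ∨ k = m + 3 then 3 * Real.sqrt 5 else 4 * Real.sqrt 8
    with hbP
  have e1 : (T (fun k => bP (k+1)) (m+4)).det = X * Lam (m+3) - C 45 * Lam (m+2) := by
    have c1 : T (fun k => bP (k+1)) (m+4) = T (fun k => bL (m+4-2-k)) (m+4) := by
      refine T_congr fun k hk => ?_
      simp only [hbP, bL]
      split_ifs <;> first | rfl | (exfalso; (try simp only [false_or] at *); omega)
    rw [c1, det_T_rev bL (m+4)]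
    exact det_T_bL (m+2)
  have e2 : (T (fun k => bP (k+2)) (m+3)).det = X * Lam (m+2) - C 45 * Lam (m+1) := by
    have c2 : T (fun k => bP (k+2)) (m+3) = T (fun k => bL (m+3-2-k)) (m+3) := by
      refine T_congr fun k hk => ?_
      simp only [hbP, bL]
      split_ifs <;> first | rfl | (exfalso; (try simp only [false_or] at *); omega)
    rw [c2, det_T_rev bL (m+3)]
    exact det_T_bL (m+1)
  have hb0 : C (bP 0) = C (3 * Real.sqrt 5) := by simp [hbP]
  have step := det_T_rec bP (m+3)
  rw [e1, e2, hb0, sq_sqrt5] at step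
  have : (T bP (m+5)).det = (T bP (m+3+2)).det := rfl
  rw [this, step, C_90, C_2025]
  ring


theorem eso_charpoly_path (n : ℕ) (hn : 5 ≤ n) :
    esoCharpoly (SimpleGraph.pathGraph n) =
      X ^ 2 * Lam (n - 2) - C 90 * X * Lam (n - 3) + C 2025 * Lam (n - 4) := by
  obtain ⟨m, rfl⟩ : ∃ m, n = m + 5 := ⟨n - 5, by omega⟩
  have e2 : m + 5 - 2 = m + 3 := rfl
  have e3 : m + 5 - 3 = m + 2 := rfl
  have e4 : m + 5 - 4 = m + 1 := rfl
  rw [e2, e3, e4]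
  show (Matrix.charmatrix (esoMatrix (SimpleGraph.pathGraph (m+5)))).det = _
  rw [charmatrix_path m]
  exact det_T_path m
end

section
/- For every n ≥ 2, the elliptic Sombor energy of the star graph S_n = K_{1,n−1} is E_ESO(S_n) = 2n√((n−1)(n²−2n+2)). -/
section auxESO
variable {V : Type*} [Fintype V] [DecidableEq V] {A : Matrix V V ℝ}

lemma my_sum_eig (hA : A.IsHermitian) : ∑ i, hA.eigenvalues i = A.trace := by
  conv_rhs => rw [hA.spectral_theorem, Unitary.conjStarAlgAut_apply]
  rw [Matrix.trace_mul_cycle, Matrix.UnitaryGroup.star_mul_self, one_mul, Matrix.trace_diagonal]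
  simp

lemma my_sum_sq_eig (hA : A.IsHermitian) : ∑ i, hA.eigenvalues i ^ 2 = (A * A).trace := by
  conv_rhs => rw [hA.spectral_theorem, Unitary.conjStarAlgAut_apply]
  rw [show ((hA.eigenvectorUnitary : Matrix V V ℝ) * Matrix.diagonal (RCLike.ofReal ∘ hA.eigenvalues)
      * star (hA.eigenvectorUnitary : Matrix V V ℝ)) *
      ((hA.eigenvectorUnitary : Matrix V V ℝ) * Matrix.diagonal (RCLike.ofReal ∘ hA.eigenvalues)
      * star (hA.eigenvectorUnitary : Matrix V V ℝ)) =
      (hA.eigenvectorUnitary : Matrix V V ℝ) * (Matrix.diagonal (RCLike.ofReal ∘ hA.eigenvalues) *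
      ((star (hA.eigenvectorUnitary : Matrix V V ℝ) * (hA.eigenvectorUnitary : Matrix V V ℝ)) *
       (Matrix.diagonal (RCLike.ofReal ∘ hA.eigenvalues) *
      star (hA.eigenvectorUnitary : Matrix V V ℝ)))) by simp only [mul_assoc]]
  rw [Matrix.UnitaryGroup.star_mul_self, one_mul, ← mul_assoc, ← mul_assoc,
    Matrix.trace_mul_cycle, ← mul_assoc, Matrix.UnitaryGroup.star_mul_self, one_mul,
    Matrix.diagonal_mul_diagonal, Matrix.trace_diagonal]
  simp [sq]

omit [DecidableEq V] in
lemma my_rank_add_le (B C : Matrix V V ℝ) : (B + C).rank ≤ B.rank + C.rank := by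
  rw [Matrix.rank, Matrix.rank, Matrix.rank, Matrix.mulVecLin_add]
  have h : LinearMap.range (B.mulVecLin + C.mulVecLin) ≤
      LinearMap.range B.mulVecLin ⊔ LinearMap.range C.mulVecLin := by
    rintro x ⟨y, rfl⟩
    exact Submodule.add_mem_sup (LinearMap.mem_range_self _ y) (LinearMap.mem_range_self _ y)
  exact le_trans (Submodule.finrank_mono h)
    (Submodule.finrank_add_le_finrank_add_finrank _ _)

omit [DecidableEq V] in
lemma my_rank_vmv (w v : V → ℝ) : (Matrix.vecMulVec w v).rank ≤ 1 := by
  rw [Matrix.rank]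
  have h : LinearMap.range (Matrix.vecMulVec w v).mulVecLin ≤ Submodule.span ℝ {w} := by
    rintro x ⟨y, rfl⟩
    have hy : (Matrix.vecMulVec w v).mulVecLin y = (dotProduct v y) • w := by
      ext i
      simp [Matrix.mulVecLin, Matrix.mulVec, Matrix.vecMulVec_apply, dotProduct,
        Finset.sum_mul, Finset.mul_sum, mul_comm, mul_left_comm]
    rw [hy]
    exact Submodule.smul_mem _ _ (Submodule.mem_span_singleton_self w)
  refine le_trans (Submodule.finrank_mono h) ?_
  have := finrank_span_le_card (R := ℝ) ({w} : Set (V → ℝ))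
  simpa using this
end auxESO


open Polynomial Real

/-- The star graph `S_n = K_{1,n-1}` on `n` vertices. -/
def starGraph (n : ℕ) : SimpleGraph (Fin 1 ⊕ Fin (n - 1)) :=
  completeBipartiteGraph (Fin 1) (Fin (n - 1))

theorem eso_energy_star (n : ℕ) (hn : 2 ≤ n) :
    esoEnergy (starGraph n) =
      2 * n * Real.sqrt (((n : ℝ) - 1) * ((n : ℝ) ^ 2 - 2 * n + 2)) := by
  classical
  set G := starGraph n with hG
  set hH := esoMatrix_isHermitian G with hHdef
  set ε := hH.eigenvalues with hε
  -- degrees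
  have hdl : ∀ a : Fin 1, G.degree (Sum.inl a) = n - 1 := by
    intro a
    rw [SimpleGraph.degree]
    rw [show G.neighborFinset (Sum.inl a)
        = Finset.univ.map ⟨Sum.inr, Sum.inr_injective⟩ by
      ext w
      cases w <;> simp [hG, starGraph]]
    simp
  have hdr : ∀ b : Fin (n-1), G.degree (Sum.inr b) = 1 := by
    intro b
    rw [SimpleGraph.degree]
    rw [show G.neighborFinset (Sum.inr b)
        = Finset.univ.map ⟨Sum.inl, Sum.inl_injective⟩ by
      ext w
      cases w <;> simp [hG, starGraph, Fin.eq_zero]]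
    simp
  have hncast : ((n - 1 : ℕ) : ℝ) = (n : ℝ) - 1 := by
    have h1n : 1 ≤ n := Nat.one_le_of_lt hn
    push_cast [Nat.cast_sub h1n]
    ring
  set c : ℝ := (n : ℝ) * Real.sqrt (((n:ℝ) - 1)^2 + 1) with hc
  have hsq : (((n:ℝ) - 1)^2 + 1) = (n:ℝ)^2 - 2*n + 2 := by ring
  have hnr : (2:ℝ) ≤ (n:ℝ) := by exact_mod_cast hn
  have hcpos : 0 < c := by
    apply mul_pos (by linarith)
    apply Real.sqrt_pos.2
    nlinarith
  -- entries
  have hAlr : ∀ (a : Fin 1) (b : Fin (n-1)), esoMatrix G (Sum.inl a) (Sum.inr b) = c := by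
    intro a b
    have hadj : G.Adj (Sum.inl a) (Sum.inr b) := by simp [hG, starGraph]
    simp only [esoMatrix, Matrix.of_apply, if_pos hadj, hdl, hdr, hc, hncast]
    norm_num
  have hsymm : ∀ i j, esoMatrix G i j = esoMatrix G j i := by
    intro i j
    conv_lhs => rw [← esoMatrix_isHermitian G]
    simp [Matrix.conjTranspose_apply]
  have hArl : ∀ (a : Fin 1) (b : Fin (n-1)), esoMatrix G (Sum.inr b) (Sum.inl a) = c := by
    intro a b
    rw [hsymm]
    exact hAlr a b
  have hAll : ∀ (a a' : Fin 1), esoMatrix G (Sum.inl a) (Sum.inl a') = 0 := by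
    intro a a'
    have hadj : ¬ G.Adj (Sum.inl a) (Sum.inl a') := by simp [hG, starGraph]
    simp only [esoMatrix, Matrix.of_apply, if_neg hadj]
  have hArr : ∀ (b b' : Fin (n-1)), esoMatrix G (Sum.inr b) (Sum.inr b') = 0 := by
    intro b b'
    have hadj : ¬ G.Adj (Sum.inr b) (Sum.inr b') := by simp [hG, starGraph]
    simp only [esoMatrix, Matrix.of_apply, if_neg hadj]
  -- facts about eigenvalues
  have h1 : ∑ i, ε i = 0 := by
    rw [hε, my_sum_eig hH, Matrix.trace]
    rw [Fintype.sum_sum_type]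
    simp [Matrix.diag, hAll, hArr]
  have h2 : ∑ i, ε i ^ 2 = 2 * ((n:ℝ) - 1) * c^2 := by
    rw [hε, my_sum_sq_eig hH, Matrix.trace]
    rw [Fintype.sum_sum_type]
    simp only [Matrix.diag, Matrix.mul_apply, Fintype.sum_sum_type, hAll, hArr, hAlr, hArl,
      zero_mul, mul_zero, Finset.sum_const, Finset.card_univ, Fintype.card_fin, nsmul_eq_mul,
      Finset.sum_add_distrib, add_zero, zero_add, Fintype.card_ofSubsingleton]
    rw [hncast]
    ring
  have hrank : (esoMatrix G).rank ≤ 2 := by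
    have key : esoMatrix G = Matrix.vecMulVec (fun i => if i.isLeft then c else 0)
        (fun i => if i.isRight then 1 else 0) +
        Matrix.vecMulVec (fun i => if i.isRight then 1 else 0)
        (fun i => if i.isLeft then c else 0) := by
      ext i j
      cases i <;> cases j <;>
        simp [Matrix.vecMulVec_apply, hAll, hArr, hAlr, hArl]
    calc (esoMatrix G).rank ≤ _ + _ := key ▸ my_rank_add_le _ _
      _ ≤ 1 + 1 := add_le_add (my_rank_vmv _ _) (my_rank_vmv _ _)
      _ = 2 := rfl
  have hcard : Fintype.card {i // ε i ≠ 0} ≤ 2 := hH.rank_eq_card_non_zero_eigs ▸ hrank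
  -- the nonzero eigenvalue support
  set s : Finset (Fin 1 ⊕ Fin (n-1)) := Finset.univ.filter (fun i => ε i ≠ 0) with hs
  have hscard : s.card ≤ 2 := by
    rw [hs, ← Fintype.card_subtype]
    exact hcard
  have hne : ∀ x ∈ Finset.univ, ε x ≠ 0 → (fun i => ε i ≠ 0) x := fun x _ h => h
  have hsum1 : ∑ i ∈ s, ε i = 0 := by
    rw [hs, Finset.sum_filter_of_ne hne]; exact h1
  have hsum2 : ∑ i ∈ s, ε i ^ 2 = 2 * ((n:ℝ) - 1) * c^2 := by
    rw [hs, Finset.sum_filter_of_ne (fun x _ h => by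
      intro h0; exact h (by rw [h0]; norm_num))]
    exact h2
  have habs : esoEnergy G = ∑ i ∈ s, |ε i| := by
    rw [esoEnergy, hs]
    rw [Finset.sum_filter_of_ne (fun x _ h => by
      intro h0; exact h (by rw [h0]; norm_num))]
  have hpos : 0 < 2 * ((n:ℝ) - 1) * c^2 := by
    apply mul_pos (by linarith) (pow_pos hcpos 2)
  -- s has exactly two elements
  have hscard2 : s.card = 2 := by
    rcases Nat.lt_or_ge s.card 2 with h | h
    · exfalso
      interval_cases h' : s.card
      · rw [Finset.card_eq_zero.1 h', Finset.sum_empty] at hsum2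
        linarith
      · obtain ⟨i, hi⟩ := Finset.card_eq_one.1 h'
        rw [hi, Finset.sum_singleton] at hsum1 hsum2
        rw [hsum1] at hsum2
        have h0 : (0:ℝ)^2 = 0 := by norm_num
        rw [h0] at hsum2
        linarith
    · exact le_antisymm hscard h
  obtain ⟨i, j, hij, hsij⟩ := Finset.card_eq_two.1 hscard2
  rw [hsij] at hsum1 hsum2 habs
  rw [Finset.sum_pair hij] at hsum1 hsum2
  rw [Finset.sum_pair hij] at habs
  -- solve
  have hji : ε j = - ε i := by linarith
  have hei2 : ε i ^ 2 = ((n:ℝ) - 1) * c^2 := by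
    rw [hji] at hsum2
    nlinarith [hsum2]
  have heiabs : |ε i| = Real.sqrt (((n:ℝ)-1) * c^2) := by
    rw [← Real.sqrt_sq_eq_abs, hei2]
  have : esoEnergy G = 2 * Real.sqrt (((n:ℝ)-1) * c^2) := by
    rw [habs, hji, abs_neg, heiabs]
    ring
  rw [this]
  have hc2 : c^2 = (n:ℝ)^2 * ((n:ℝ)^2 - 2*n + 2) := by
    rw [hc, mul_pow, Real.sq_sqrt (by nlinarith : (0:ℝ) ≤ ((n:ℝ)-1)^2+1), hsq]
  rw [hc2, show ((n:ℝ)-1) * ((n:ℝ)^2 * ((n:ℝ)^2 - 2*n + 2))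
      = (n:ℝ)^2 * (((n:ℝ)-1) * ((n:ℝ)^2 - 2*n+2)) by ring]
  rw [Real.sqrt_mul (sq_nonneg _), Real.sqrt_sq (by linarith : (0:ℝ) ≤ (n:ℝ))]
  ring
end

section
/- For natural numbers m, n ≥ 2, the elliptic Sombor energy of the complete bipartite graph K_{m,n} is E_ESO(K_{m,n}) = 2(m+n)√(mn(m²+n²)). -/
open Polynomial Real

lemma aux_trace_sq {V : Type*} [Fintype V] [DecidableEq V] {A : Matrix V V ℝ}
    (hA : A.IsHermitian) : (A * A).trace = ∑ i, hA.eigenvalues i ^ 2 := by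
  set U : Matrix V V ℝ := (hA.eigenvectorUnitary : Matrix V V ℝ) with hUdef
  set D : Matrix V V ℝ := Matrix.diagonal (RCLike.ofReal ∘ hA.eigenvalues) with hDdef
  have hU1 : star U * U = 1 := by
    rw [hUdef, ← Unitary.coe_star]; exact Unitary.coe_star_mul_self _
  have hs : A = U * D * star U := hA.spectral_theorem
  have h2 : A * A = U * (D * D) * star U := by
    rw [hs]
    calc U * D * star U * (U * D * star U) = U * D * (star U * U) * D * star U := by
          simp only [Matrix.mul_assoc]
      _ = U * (D * D) * star U := by rw [hU1]; simp only [Matrix.mul_one, Matrix.mul_assoc]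
  rw [h2, Matrix.trace_mul_cycle, ← Matrix.mul_assoc, hU1, Matrix.one_mul]
  simp [hDdef, Matrix.diagonal_mul_diagonal, Matrix.trace_diagonal, pow_two]

lemma aux_cube {V : Type*} [Fintype V] [DecidableEq V] {A : Matrix V V ℝ}
    (hA : A.IsHermitian) {t : ℝ} (h : A * A * A = t • A) (i : V) :
    hA.eigenvalues i ^ 3 = t * hA.eigenvalues i := by
  have hlam : ∃ l, l = hA.eigenvalues i := ⟨_, rfl⟩
  obtain ⟨lam, hlam⟩ := hlam
  rw [← hlam]
  set v : V → ℝ := ⇑(hA.eigenvectorBasis i) with hv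
  have hev : A.mulVec v = lam • v := by rw [hlam]; exact hA.mulVec_eigenvectorBasis i
  have hvne : v ≠ 0 := by
    intro h0
    apply hA.eigenvectorBasis.orthonormal.ne_zero i
    ext x
    exact congrFun h0 x
  have h1 : (A * A * A).mulVec v = (lam ^ 3) • v := by
    rw [← Matrix.mulVec_mulVec, ← Matrix.mulVec_mulVec, hev, Matrix.mulVec_smul, hev,
      Matrix.mulVec_smul, Matrix.mulVec_smul, hev, smul_smul, smul_smul]
    congr 1
    ring
  have h2 : (A * A * A).mulVec v = (t * lam) • v := by
    rw [h, Matrix.smul_mulVec, hev, smul_smul]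
  have h3 : (lam ^ 3 - t * lam) • v = 0 := by
    rw [sub_smul, ← h1, ← h2, sub_self]
  rcases smul_eq_zero.mp h3 with h4 | h4
  · linarith [h4]
  · exact absurd h4 hvne

theorem eso_energy_completeBipartite (m n : ℕ) (hm : 2 ≤ m) (hn : 2 ≤ n) :
    esoEnergy (completeBipartiteGraph (Fin m) (Fin n)) =
      2 * ((m : ℝ) + n) * Real.sqrt ((m : ℝ) * n * ((m : ℝ) ^ 2 + (n : ℝ) ^ 2)) := by
  classical
  set G := completeBipartiteGraph (Fin m) (Fin n) with hG
  have hdl : ∀ a : Fin m, G.degree (Sum.inl a) = n := by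
    intro a
    rw [SimpleGraph.degree, SimpleGraph.neighborFinset_eq_filter]
    have he : Finset.univ.filter (fun w => G.Adj (Sum.inl a) w)
        = Finset.univ.map ⟨Sum.inr, Sum.inr_injective⟩ := by
      ext w; cases w <;> simp [hG]
    rw [he]; simp
  have hdr : ∀ b : Fin n, G.degree (Sum.inr b) = m := by
    intro b
    rw [SimpleGraph.degree, SimpleGraph.neighborFinset_eq_filter]
    have he : Finset.univ.filter (fun w => G.Adj (Sum.inr b) w)
        = Finset.univ.map ⟨Sum.inl, Sum.inl_injective⟩ := by
      ext w; cases w <;> simp [hG]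
    rw [he]; simp
  set c : ℝ := ((m : ℝ) + n) * Real.sqrt ((m : ℝ) ^ 2 + (n : ℝ) ^ 2) with hc
  set M := esoMatrix G with hMdef
  have hM : M = Matrix.of (fun i j => if G.Adj i j then c else 0) := by
    rw [hMdef]
    ext i j
    simp only [esoMatrix, Matrix.of_apply]
    rcases i with a | b
    · rcases j with a' | b'
      · simp [hG]
      · have hadj : G.Adj (Sum.inl a) (Sum.inr b') := by simp [hG]
        rw [if_pos hadj, if_pos hadj, hdl, hdr, hc, add_comm ((n:ℝ)) ((m:ℝ)),
          add_comm ((n:ℝ)^2) ((m:ℝ)^2)]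
    · rcases j with a' | b'
      · have hadj : G.Adj (Sum.inr b) (Sum.inl a') := by simp [hG]
        rw [if_pos hadj, if_pos hadj, hdr, hdl, hc]
      · simp [hG]
  have h2 : M * M = Matrix.of (fun i j =>
      match i, j with
      | Sum.inl _, Sum.inl _ => (n : ℝ) * c ^ 2
      | Sum.inr _, Sum.inr _ => (m : ℝ) * c ^ 2
      | _, _ => 0) := by
    rw [hM]
    ext i j
    rcases i with a | b <;> rcases j with a' | b' <;>
      (simp [Matrix.mul_apply, Fintype.sum_sum_type, hG]; try ring; try tauto)
  have h3 : M * M * M = (((m : ℝ) * n) * c ^ 2) • M := by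
    rw [h2, hM]
    ext i j
    rcases i with a | b <;> rcases j with a' | b' <;>
      (simp [Matrix.mul_apply, Fintype.sum_sum_type, hG, Matrix.smul_apply]; try ring; try tauto)
  have htr : (M * M).trace = 2 * m * n * c ^ 2 := by
    rw [h2]
    simp [Matrix.trace, Matrix.diag, Fintype.sum_sum_type]
    ring
  have hsum : ∑ i, (esoMatrix_isHermitian G).eigenvalues i ^ 2 = 2 * m * n * c ^ 2 :=
    (aux_trace_sq (esoMatrix_isHermitian G)).symm.trans htr
  have hcube : ∀ i, (esoMatrix_isHermitian G).eigenvalues i ^ 3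
      = ((m : ℝ) * n * c ^ 2) * (esoMatrix_isHermitian G).eigenvalues i :=
    fun i => aux_cube (esoMatrix_isHermitian G) h3 i
  have hm0 : (0 : ℝ) < m := by exact_mod_cast Nat.lt_of_lt_of_le (by norm_num) hm
  have hn0 : (0 : ℝ) < n := by exact_mod_cast Nat.lt_of_lt_of_le (by norm_num) hn
  have hc0 : 0 < c := by
    rw [hc]
    have : (0:ℝ) < (m:ℝ)^2 + (n:ℝ)^2 := by positivity
    have := Real.sqrt_pos.mpr this
    positivity
  set a : ℝ := c * Real.sqrt ((m : ℝ) * n) with ha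
  have ha0 : 0 < a := by
    rw [ha]
    have : (0:ℝ) < (m:ℝ) * n := by positivity
    have := Real.sqrt_pos.mpr this
    positivity
  have ha2 : a ^ 2 = (m : ℝ) * n * c ^ 2 := by
    rw [ha, mul_pow, Real.sq_sqrt (by positivity : (0:ℝ) ≤ (m:ℝ) * n)]
    ring
  have habs : ∀ i, |(esoMatrix_isHermitian G).eigenvalues i|
      = (esoMatrix_isHermitian G).eigenvalues i ^ 2 / a := by
    intro i
    have h1 : (esoMatrix_isHermitian G).eigenvalues i ^ 3
        = a ^ 2 * (esoMatrix_isHermitian G).eigenvalues i := by rw [ha2]; exact hcube i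
    have h0 : (esoMatrix_isHermitian G).eigenvalues i *
        ((esoMatrix_isHermitian G).eigenvalues i ^ 2 - a ^ 2) = 0 := by linear_combination h1
    rcases mul_eq_zero.mp h0 with h4 | h4
    · simp [h4]
    · have he2 : (esoMatrix_isHermitian G).eigenvalues i ^ 2 = a ^ 2 := by linarith
      calc |(esoMatrix_isHermitian G).eigenvalues i|
          = Real.sqrt ((esoMatrix_isHermitian G).eigenvalues i ^ 2) :=
            (Real.sqrt_sq_eq_abs _).symm
        _ = Real.sqrt (a ^ 2) := by rw [he2]
        _ = a := Real.sqrt_sq ha0.le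
        _ = (esoMatrix_isHermitian G).eigenvalues i ^ 2 / a := by
            rw [he2, sq, mul_div_assoc, div_self ha0.ne', mul_one]
  have hE : esoEnergy G = 2 * a := by
    rw [esoEnergy]
    calc ∑ i, |(esoMatrix_isHermitian G).eigenvalues i|
        = ∑ i, (esoMatrix_isHermitian G).eigenvalues i ^ 2 / a :=
          Finset.sum_congr rfl (fun i _ => habs i)
      _ = (∑ i, (esoMatrix_isHermitian G).eigenvalues i ^ 2) / a := by rw [Finset.sum_div]
      _ = (2 * a ^ 2) / a := by rw [hsum, ha2]; ring_nf
      _ = 2 * a := by rw [sq]; field_simp; try ring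
  rw [hE, Real.sqrt_mul (by positivity : (0:ℝ) ≤ (m:ℝ) * n), ha, hc]
  ring
end
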